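/- Smoothness of the Example 2 profile: Let n ≥ 1 and let α, β, γ, κ be positive real numbers. The function u : ℝ × ℝⁿ → ℝ defined by u(t,x) = κ t^{−β} exp(−γ(1+|x|²)^{α/2}/t) for t > 0 and u(t,x) = 0 for t ≤ 0 is infinitely differentiable (C^∞) on all of ℝ × ℝⁿ, and u together with all of its partial derivatives vanishes on the set { (t,x) : t ≤ 0 }. -/

import Mathlib

open MeasureTheory Topology

noncomputable section

/-- The whole space `ℝ × ℝⁿ` (time × space). -/
abbrev Sp (n : ℕ) : Type := ℝ × EuclideanSpace ℝ (Fin n)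

/-- Classical partial derivative in the time direction. -/
def pdt {n : ℕ} (f : Sp n → ℝ) (p : Sp n) : ℝ :=
  fderiv ℝ f p (1, 0)

/-- Classical partial derivative in the `i`-th space direction. -/
def pdx {n : ℕ} (i : Fin n) (f : Sp n → ℝ) (p : Sp n) : ℝ :=
  fderiv ℝ f p (0, EuclideanSpace.single i 1)

/-- The odd nonlinearity `s ↦ |s|^(q-1) s` (with the convention `|0|^(q-1)·0 = 0`). -/
def nl (q s : ℝ) : ℝ := |s| ^ (q - 1) * s

/-- A test function: infinitely differentiable with compact support. -/
def IsTest {n : ℕ} (φ : Sp n → ℝ) : Prop :=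
  ContDiff ℝ (⊤ : ℕ∞) φ ∧ HasCompactSupport φ

/-- `g` is the weak time-derivative of `u` on `ℝ × ℝⁿ`: `g` is locally integrable and
integration by parts against every test function holds. -/
def IsWeakDerivT {n : ℕ} (u g : Sp n → ℝ) : Prop :=
  LocallyIntegrable g volume ∧
  ∀ φ : Sp n → ℝ, IsTest φ → ∫ p, u p * pdt φ p = -∫ p, g p * φ p

/-- `g` is the weak `x_i`-derivative of `u` on `ℝ × ℝⁿ`. -/
def IsWeakDerivX {n : ℕ} (i : Fin n) (u g : Sp n → ℝ) : Prop :=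
  LocallyIntegrable g volume ∧
  ∀ φ : Sp n → ℝ, IsTest φ → ∫ p, u p * pdx i φ p = -∫ p, g p * φ p

/-- Standing assumptions on the coefficients `a_{ij}` and the dominating function `A`:
measurability, local boundedness, symmetry, and `0 ≤ Σ a_{ij} ξ_i ξ_j ≤ A |ξ|²` a.e. -/
structure Coeffs (n : ℕ) (a : Fin n → Fin n → Sp n → ℝ) (A : Sp n → ℝ) : Prop where
  meas : ∀ i j, Measurable (a i j)
  locBdd : ∀ i j, ∀ K : Set (Sp n), IsCompact K → ∃ C : ℝ, ∀ p ∈ K, |a i j p| ≤ C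
  symm : ∀ᵐ p : Sp n, ∀ i j, a i j p = a j i p
  measA : Measurable A
  nonnegA : ∀ p, 0 ≤ A p
  locBddA : ∀ K : Set (Sp n), IsCompact K → ∃ C : ℝ, ∀ p ∈ K, A p ≤ C
  quad : ∀ᵐ p : Sp n, ∀ ξ : Fin n → ℝ,
    0 ≤ ∑ i : Fin n, ∑ j : Fin n, a i j p * ξ i * ξ j ∧
    ∑ i : Fin n, ∑ j : Fin n, a i j p * ξ i * ξ j ≤ A p * ∑ i : Fin n, ξ i ^ 2

/-- Condition (8): the essential supremum of `A` over the slab `{R/2 < |x| < R}`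
is at most `c·R^(2-α)`, for every `R > 1`. -/
def Cond8 {n : ℕ} (A : Sp n → ℝ) (α c : ℝ) : Prop :=
  ∀ R : ℝ, 1 < R →
    ∀ᵐ p : Sp n, (R / 2 < ‖p.2‖ ∧ ‖p.2‖ < R) → A p ≤ c * R ^ (2 - α)

/-- `(u, v)` is a weak solution of
`u_t − Σ ∂_{x_i}(a_{ij} ∂_{x_j}u) − |u|^{q−1}u ≥ v_t − Σ ∂_{x_i}(a_{ij} ∂_{x_j}v) − |v|^{q−1}v`
in the whole space `ℝ × ℝⁿ`. -/
def WeakSolPair {n : ℕ} (q : ℝ) (a : Fin n → Fin n → Sp n → ℝ) (u v : Sp n → ℝ) : Prop :=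
  Measurable u ∧ Measurable v ∧
  LocallyIntegrable u volume ∧ LocallyIntegrable v volume ∧
  LocallyIntegrable (fun p => |u p| ^ q) volume ∧
  LocallyIntegrable (fun p => |v p| ^ q) volume ∧
  ∃ ut vt : Sp n → ℝ, ∃ ux vx : Fin n → Sp n → ℝ,
    IsWeakDerivT u ut ∧ IsWeakDerivT v vt ∧
    (∀ j, IsWeakDerivX j u (ux j)) ∧ (∀ j, IsWeakDerivX j v (vx j)) ∧
    ∀ φ : Sp n → ℝ, IsTest φ → (∀ p, 0 ≤ φ p) →
      ∫ p, (vt p * φ p + ∑ i : Fin n, ∑ j : Fin n, a i j p * pdx i φ p * vx j p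
              - nl q (v p) * φ p) ≤
      ∫ p, (ut p * φ p + ∑ i : Fin n, ∑ j : Fin n, a i j p * pdx i φ p * ux j p
              - nl q (u p) * φ p)

/-- The Example 2 profile: `u(t,x) = κ t^{−β} exp(−γ(1+|x|²)^{α/2}/t)` for `t > 0`,
extended by `0` for `t ≤ 0`. -/
def profileU (n : ℕ) (α β γ κ : ℝ) (p : Sp n) : ℝ :=
  if 0 < p.1 then κ * p.1 ^ (-β) * Real.exp (-γ * (1 + ‖p.2‖ ^ 2) ^ (α / 2) / p.1) else 0

section
open Filter Real Topology

/-- one flat building block -/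
def myE (c r : ℝ) (s : ℝ) : ℝ := if 0 < s then c * s ^ r * Real.exp (-(1/s)) else 0

lemma tendsto_rpow_exp (e : ℝ) :
    Tendsto (fun s : ℝ => s ^ e * Real.exp (-(1/s))) (𝓝[>] (0:ℝ)) (𝓝 0) := by
  have h := (tendsto_rpow_mul_exp_neg_mul_atTop_nhds_zero (-e) 1 one_pos).comp
    tendsto_inv_nhdsGT_zero
  refine h.congr' ?_
  filter_upwards [self_mem_nhdsWithin] with s hs
  have hs' : (0:ℝ) < s := hs
  simp only [Function.comp]
  rw [Real.inv_rpow hs'.le, ← Real.rpow_neg hs'.le, neg_neg, neg_mul, one_mul, one_div]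

lemma tendsto_myE (c r : ℝ) : Tendsto (fun s => myE c r s) (𝓝[>] (0:ℝ)) (𝓝 0) := by
  have h := (tendsto_rpow_exp r).const_mul c
  rw [mul_zero] at h
  refine h.congr' ?_
  filter_upwards [self_mem_nhdsWithin] with s hs
  have hs' : (0:ℝ) < s := hs
  simp [myE, if_pos hs', mul_assoc]

lemma hasDerivAt_myE (c r s : ℝ) :
    HasDerivAt (myE c r) (myE (c*r) (r-1) s + myE c (r-2) s) s := by
  rcases lt_trichotomy s 0 with hs | hs | hs
  · have hmem : {t : ℝ | t < 0} ∈ 𝓝 s := (isOpen_gt' (0:ℝ)).mem_nhds hs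
    have he : myE c r =ᶠ[𝓝 s] fun _ => (0:ℝ) := by
      filter_upwards [hmem] with t ht
      simp [myE, not_lt.2 ht.le]
    have h0 : HasDerivAt (fun _ : ℝ => (0:ℝ)) 0 s := hasDerivAt_const s 0
    have := h0.congr_of_eventuallyEq he
    simpa [myE, not_lt.2 hs.le] using this
  · subst hs
    have hval : myE (c*r) (r-1) 0 + myE c (r-2) 0 = 0 := by simp [myE]
    rw [hval, hasDerivAt_iff_tendsto_slope]
    rw [← nhdsLT_sup_nhdsGT (0:ℝ), tendsto_sup]
    constructor
    · have : ∀ᶠ t in 𝓝[<] (0:ℝ), slope (myE c r) 0 t = 0 := by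
        filter_upwards [self_mem_nhdsWithin] with t ht
        have : ¬ (0:ℝ) < t := not_lt.2 (le_of_lt ht)
        simp [slope, myE, this]
      exact tendsto_const_nhds.congr' (this.mono fun t ht => ht.symm)
    · have h := (tendsto_rpow_exp (r-1)).const_mul c
      rw [mul_zero] at h
      refine h.congr' ?_
      filter_upwards [self_mem_nhdsWithin] with t ht
      have ht' : (0:ℝ) < t := ht
      have : t ^ (r - 1) = t ^ r / t := by
        rw [Real.rpow_sub ht', Real.rpow_one]
      rw [this]
      simp [slope, myE, if_pos ht']
      field_simp
  · have hmem : {t : ℝ | 0 < t} ∈ 𝓝 s := (isOpen_lt' (0:ℝ)).mem_nhds hs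
    have he : myE c r =ᶠ[𝓝 s] fun t => c * t ^ r * Real.exp (-(1/t)) := by
      filter_upwards [hmem] with t ht
      simp [myE, if_pos ht]
    have h1 : HasDerivAt (fun t : ℝ => t ^ r) (r * s ^ (r-1)) s :=
      Real.hasDerivAt_rpow_const (Or.inl hs.ne')
    have h2 : HasDerivAt (fun t : ℝ => -(1/t)) ((s^2)⁻¹) s := by
      have := (hasDerivAt_inv hs.ne').neg
      simpa [one_div, Pi.neg_def] using this
    have h3 : HasDerivAt (fun t : ℝ => Real.exp (-(1/t)))
        (Real.exp (-(1/s)) * (s^2)⁻¹) s := h2.exp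
    have h4 := (h1.const_mul c).mul h3
    have := h4.congr_of_eventuallyEq he
    refine this.congr_deriv ?_
    have hs2 : s ^ r * (s^2)⁻¹ = s ^ (r-2) := by
      rw [Real.rpow_sub hs, show (2:ℝ) = ((2:ℕ):ℝ) by norm_num, Real.rpow_natCast,
        div_eq_mul_inv]
    simp only [myE, if_pos hs]
    rw [← hs2]
    ring

end

section
open Filter Real Topology

def stepL : List (ℝ × ℝ) → List (ℝ × ℝ)
  | [] => []
  | q :: L => (q.1 * q.2, q.2 - 1) :: (q.1, q.2 - 2) :: stepL L

def sumE : List (ℝ × ℝ) → ℝ → ℝ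
  | [], _ => 0
  | q :: L, s => myE q.1 q.2 s + sumE L s

lemma hasDerivAt_sumE (L : List (ℝ × ℝ)) (s : ℝ) :
    HasDerivAt (fun t => sumE L t) (sumE (stepL L) s) s := by
  induction L with
  | nil => simpa [sumE, stepL] using hasDerivAt_const s (0:ℝ)
  | cons q L ih =>
      have h := (hasDerivAt_myE q.1 q.2 s).add ih
      simp only [sumE, stepL] at h ⊢
      refine h.congr_deriv ?_
      ring

lemma contDiff_sumE (k : ℕ) (L : List (ℝ × ℝ)) :
    ContDiff ℝ (k : WithTop ℕ∞) (fun s => sumE L s) := by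
  induction k generalizing L with
  | zero =>
      rw [show ((0:ℕ) : WithTop ℕ∞) = 0 by rfl]
      refine contDiff_zero.2 ?_
      exact Differentiable.continuous (fun s => (hasDerivAt_sumE L s).differentiableAt)
  | succ k ih =>
      rw [show (((k+1:ℕ)) : WithTop ℕ∞) = ((k : WithTop ℕ∞) + 1) by norm_cast]
      refine contDiff_succ_iff_deriv.2 ⟨fun s => (hasDerivAt_sumE L s).differentiableAt,
        ?_, ?_⟩
      · intro h; exact absurd h (by simp)
      · have : deriv (fun t => sumE L t) = fun s => sumE (stepL L) s := by
          funext s; exact (hasDerivAt_sumE L s).deriv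
        rw [this]; exact ih _

lemma contDiff_top_sumE (L : List (ℝ × ℝ)) :
    ContDiff ℝ ((⊤ : ℕ∞) : WithTop ℕ∞) (fun s => sumE L s) :=
  contDiff_infty.2 fun k => contDiff_sumE k L

end

/-- **Smoothness of the Example 2 profile**: the piecewise-defined function is `C^∞` on all
of `ℝ × ℝⁿ`, and it vanishes together with all of its derivatives on `{t ≤ 0}`. -/
theorem profileU_smooth (n : ℕ) (hn : 1 ≤ n) (α β γ κ : ℝ)
    (hα : 0 < α) (hβ : 0 < β) (hγ : 0 < γ) (hκ : 0 < κ) :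
    ContDiff ℝ (⊤ : ℕ∞) (profileU n α β γ κ) ∧
    (∀ p : Sp n, p.1 ≤ 0 → profileU n α β γ κ p = 0) ∧
    (∀ k : ℕ, ∀ p : Sp n, p.1 ≤ 0 → iteratedFDeriv ℝ k (profileU n α β γ κ) p = 0) := by
  classical
  set c : EuclideanSpace ℝ (Fin n) → ℝ := fun x => γ * (1 + ‖x‖ ^ 2) ^ (α / 2) with hc_def
  have hbase_pos : ∀ x : EuclideanSpace ℝ (Fin n), (0:ℝ) < 1 + ‖x‖ ^ 2 := fun x => by
    positivity
  have hc_pos : ∀ x, 0 < c x := fun x =>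
    mul_pos hγ (Real.rpow_pos_of_pos (hbase_pos x) _)
  have hc_smooth : ContDiff ℝ ((⊤ : ℕ∞) : WithTop ℕ∞) c := by
    exact contDiff_const.mul
      ((contDiff_const.add (contDiff_norm_sq ℝ)).rpow_const_of_ne fun x => (hbase_pos x).ne')
  set U : Sp n → ℝ :=
    fun p => (κ * (c p.2) ^ (-β)) * sumE [(1, -β)] (p.1 / c p.2) with hU_def
  have hcp2 : ContDiff ℝ ((⊤ : ℕ∞) : WithTop ℕ∞) (fun p : Sp n => c p.2) :=
    hc_smooth.comp contDiff_snd
  have hU_smooth : ContDiff ℝ ((⊤ : ℕ∞) : WithTop ℕ∞) U := by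
    refine ContDiff.mul ?_ ?_
    · exact contDiff_const.mul
        (hcp2.rpow_const_of_ne fun p => (hc_pos p.2).ne')
    · exact (contDiff_top_sumE [(1, -β)]).comp
        (contDiff_fst.div hcp2 fun p => (hc_pos p.2).ne')
  have hEq : profileU n α β γ κ = U := by
    funext p
    obtain ⟨t, x⟩ := p
    simp only [profileU, hU_def, sumE, add_zero]
    by_cases ht : 0 < t
    · have hcx := hc_pos x
      have hdiv : 0 < t / c x := div_pos ht hcx
      rw [if_pos ht]
      simp only [myE, if_pos hdiv]
      have h1 : (1:ℝ) / (t / c x) = c x / t := one_div_div _ _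
      have h2 : (t / c x) ^ (-β) = t ^ (-β) / (c x) ^ (-β) :=
        Real.div_rpow ht.le hcx.le _
      have h3 : -γ * (1 + ‖x‖ ^ 2) ^ (α / 2) / t = -(c x / t) := by
        rw [hc_def]; ring
      rw [h1, h2, h3]
      have hne : (c x) ^ (-β) ≠ 0 := (Real.rpow_pos_of_pos hcx _).ne'
      field_simp
    · rw [if_neg ht]
      have : ¬ 0 < t / c x := by
        rw [not_lt]
        exact div_nonpos_of_nonpos_of_nonneg (not_lt.1 ht) (hc_pos x).le
      simp [myE, this]
  have hzero : ∀ p : Sp n, p.1 ≤ 0 → profileU n α β γ κ p = 0 := by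
    intro p hp
    simp [profileU, not_lt.2 hp]
  have hsmooth : ContDiff ℝ ((⊤ : ℕ∞) : WithTop ℕ∞) (profileU n α β γ κ) := by
    rw [hEq]; exact hU_smooth
  refine ⟨hsmooth, hzero, ?_⟩
  intro k p hp
  -- first: vanishing of the iterated derivative at points with negative time
  have hneg : ∀ q : Sp n, q.1 < 0 → iteratedFDeriv ℝ k (profileU n α β γ κ) q = 0 := by
    intro q hq
    have hmem : {r : Sp n | r.1 < 0} ∈ 𝓝 q :=
      (isOpen_lt continuous_fst continuous_const).mem_nhds hq
    have hev : profileU n α β γ κ =ᶠ[𝓝 q] fun _ => (0:ℝ) := by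
      filter_upwards [hmem] with r hr
      exact hzero r hr.le
    have : iteratedFDeriv ℝ k (profileU n α β γ κ) q
        = iteratedFDeriv ℝ k (fun _ : Sp n => (0:ℝ)) q := by
      rw [← iteratedFDerivWithin_univ, ← iteratedFDerivWithin_univ]
      exact Filter.EventuallyEq.iteratedFDerivWithin_eq
        (hev.filter_mono nhdsWithin_le_nhds) (hzero q hq.le) k
    rw [this, iteratedFDeriv_zero_fun]
    rfl
  rcases lt_or_eq_of_le hp with hlt | heq
  · exact hneg p hlt
  · -- p.1 = 0 : use continuity of the iterated derivative
    have hcont : Continuous (iteratedFDeriv ℝ k (profileU n α β γ κ)) :=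
      hsmooth.continuous_iteratedFDeriv (by exact_mod_cast le_top)
    set q : ℕ → Sp n := fun j => (p.1 - 1/(j+1 : ℝ), p.2) with hq_def
    have hq_tendsto : Filter.Tendsto q Filter.atTop (𝓝 p) := by
      rw [show p = (p.1 - 0, p.2) by simp]
      exact ((tendsto_const_nhds.sub
        tendsto_one_div_add_atTop_nhds_zero_nat)).prodMk_nhds tendsto_const_nhds
    have hqneg : ∀ j : ℕ, (q j).1 < 0 := by
      intro j
      have h1 : (0:ℝ) < 1/(j+1 : ℝ) := by positivity
      have : p.1 ≤ 0 := hp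
      simp only [hq_def]
      linarith
    have h1 : Filter.Tendsto (fun j => iteratedFDeriv ℝ k (profileU n α β γ κ) (q j))
        Filter.atTop (𝓝 (iteratedFDeriv ℝ k (profileU n α β γ κ) p)) :=
      (hcont.tendsto p).comp hq_tendsto
    have h2 : (fun j => iteratedFDeriv ℝ k (profileU n α β γ κ) (q j))
        = fun _ => 0 := by
      funext j; exact hneg (q j) (hqneg j)
    rw [h2] at h1
    exact (tendsto_nhds_unique tendsto_const_nhds h1).symm
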